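/- Let n ≥ 1, j ≥ 0, i ≥ 1. Define V ⊆ F_2[X]/(X^{2n}) as the span of {X^{2k+1} : 0 ≤ k ≤ n−1} and U as the span of {(X²+X^{2j+3})^m : 1 ≤ m ≤ n−1}. Then the F_2-dimension of {f ∈ V : f^{2^i} ∈ U} equals n − max(⌈(2n − (2^{i+1}−2)j − (2^{i+1}−1))/2^{i+1}⌉, 0). -/

import Mathlib

open Polynomial

namespace KuelAux

lemma cast_choose_even (u v : ℕ) : (((2*u).choose (2*v) : ℕ) : ZMod 2) = (u.choose v : ZMod 2) := by
  have h := Choose.choose_modEq_choose_mod_mul_choose_div_nat (n := 2*u) (k := 2*v) (p := 2)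
  simp [Nat.mul_mod_right, Nat.mul_div_cancel_left] at h
  exact (ZMod.natCast_eq_natCast_iff _ _ _).mpr h

lemma cast_choose_odd (u v : ℕ) : (((2*u).choose (2*v+1) : ℕ) : ZMod 2) = 0 := by
  have h := Choose.choose_modEq_choose_mod_mul_choose_div_nat (n := 2*u) (k := 2*v+1) (p := 2)
  simp [Nat.mul_mod_right, Nat.mul_add_mod] at h
  exact (ZMod.natCast_eq_natCast_iff _ _ _).mpr h

lemma cho_pow_dvd (a s t : ℕ) (h : (((2^a*s).choose t : ℕ) : ZMod 2) ≠ 0) : 2^a ∣ t := by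
  induction a generalizing t with
  | zero => simp
  | succ a ih =>
    have h2 : 2^(a+1)*s = 2*(2^a*s) := by ring
    rw [h2] at h
    rcases Nat.even_or_odd t with he | ho
    · obtain ⟨v, hv⟩ := he
      rw [hv, show v + v = 2*v by ring, cast_choose_even] at h
      obtain ⟨w, hw⟩ := ih v h
      exact ⟨w, by rw [hv, hw]; ring⟩
    · obtain ⟨v, hv⟩ := ho
      rw [hv, cast_choose_odd] at h
      simp at h

lemma cho_pow_mul (a s t : ℕ) : (((2^a*s).choose (2^a*t) : ℕ) : ZMod 2) = (s.choose t : ZMod 2) := by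
  induction a with
  | zero => simp
  | succ a ih =>
    have h2 : 2^(a+1)*s = 2*(2^a*s) := by ring
    have h3 : 2^(a+1)*t = 2*(2^a*t) := by ring
    rw [h2, h3, cast_choose_even, ih]

lemma cho_odd_one (s : ℕ) (hs : Odd s) : ((s.choose 1 : ℕ) : ZMod 2) = 1 := by
  rw [Nat.choose_one_right, ← ZMod.natCast_mod, Nat.odd_iff.mp hs]
  rfl

noncomputable def rho (n j : ℕ) (d : ℕ) : Polynomial (ZMod 2) :=
  if 2*n ≤ d then 0 else
    (if Odd d then X^(d/2) else 0) +
    ∑ t ∈ (Finset.Icc 1 (2*n)).attach,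
      ((d/2).choose t.1 : ZMod 2) • rho n j (d + (2*j+1)*t.1)
termination_by 2*n - d
decreasing_by
  have ht1 : 1 ≤ t.1 := (Finset.mem_Icc.mp t.2).1
  have : 1*1 ≤ (2*j+1)*t.1 := Nat.mul_le_mul (by omega) ht1
  omega

lemma rho_of_ge {n j d : ℕ} (h : 2*n ≤ d) : rho n j d = 0 := by rw [rho]; simp [h]

lemma rho_eq {n j d : ℕ} (h : d < 2*n) : rho n j d =
    (if Odd d then X^(d/2) else 0) +
    ∑ t ∈ Finset.Icc 1 (2*n), ((d/2).choose t : ZMod 2) • rho n j (d + (2*j+1)*t) := by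
  rw [rho, if_neg (by omega)]
  congr 1
  exact Finset.sum_attach (Finset.Icc 1 (2*n))
    (fun t => ((d/2).choose t : ZMod 2) • rho n j (d + (2*j+1)*t))


noncomputable def rtil (n j : ℕ) (p : Polynomial (ZMod 2)) : Polynomial (ZMod 2) :=
  p.sum fun d c => c • rho n j d

lemma rtil_zero (n j : ℕ) : rtil n j 0 = 0 := by simp [rtil]

lemma rtil_add (n j : ℕ) (p q : Polynomial (ZMod 2)) :
    rtil n j (p + q) = rtil n j p + rtil n j q := by
  unfold rtil
  exact Polynomial.sum_add_index p q _ (by simp) (by intros; rw [add_smul])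

lemma rtil_smul (n j : ℕ) (c : ZMod 2) (p : Polynomial (ZMod 2)) :
    rtil n j (c • p) = c • rtil n j p := by
  unfold rtil
  rw [Polynomial.sum_smul_index p c _ (by simp), Polynomial.smul_sum]
  simp [mul_smul]

lemma rtil_X_pow (n j d : ℕ) : rtil n j (X ^ d) = rho n j d := by
  rw [← Polynomial.monomial_one_right_eq_X_pow]
  unfold rtil
  rw [Polynomial.sum_monomial_index (1 : ZMod 2) _ (by simp)]
  simp

lemma rtil_finset_sum {ι : Type*} (n j : ℕ) (s : Finset ι) (f : ι → Polynomial (ZMod 2)) :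
    rtil n j (∑ k ∈ s, f k) = ∑ k ∈ s, rtil n j (f k) := by
  classical
  induction s using Finset.cons_induction with
  | empty => simp [rtil_zero]
  | cons a s ha ih => rw [Finset.sum_cons, rtil_add, ih, Finset.sum_cons]

lemma rtil_high (n j : ℕ) (p : Polynomial (ZMod 2)) (h : ∀ d ∈ p.support, 2*n ≤ d) :
    rtil n j p = 0 := by
  unfold rtil Polynomial.sum
  refine Finset.sum_eq_zero fun d hd => ?_
  dsimp only
  rw [rho_of_ge (h d hd), smul_zero]

lemma rtil_Xpow_mul (n j : ℕ) (H : Polynomial (ZMod 2)) :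
    rtil n j (X ^ (2*n) * H) = 0 := by
  apply rtil_high
  intro d hd
  by_contra hlt
  apply Polynomial.mem_support_iff.mp hd
  rw [mul_comm, Polynomial.coeff_mul_X_pow']
  rw [if_neg (by omega)]

lemma rtil_Ypow (n j m : ℕ) (hm : 1 ≤ m) :
    rtil n j ((X^2 + X^(2*j+3))^m) = 0 := by
  have hexp : (X^2 + X^(2*j+3) : Polynomial (ZMod 2))^m
      = ∑ k ∈ Finset.range (m+1), (m.choose k : ZMod 2) • X^(2*m + (2*j+1)*k) := by
    rw [add_comm, add_pow]
    apply Finset.sum_congr rfl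
    intro k hk
    have hk' : k ≤ m := by simpa [Nat.lt_succ_iff] using hk
    rw [← pow_mul, ← pow_mul, ← pow_add, Polynomial.smul_eq_C_mul, Polynomial.C_eq_natCast,
      mul_comm ((m.choose k : ℕ) : Polynomial (ZMod 2))]
    congr 2
    obtain ⟨u, hu⟩ : ∃ u, m = k + u := ⟨m - k, by omega⟩
    subst hu
    simp only [Nat.add_sub_cancel_left]
    ring
  rw [hexp, rtil_finset_sum]
  simp only [rtil_smul, rtil_X_pow]
  by_cases hmn : 2*n ≤ 2*m
  · apply Finset.sum_eq_zero
    intro k _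
    rw [rho_of_ge (by omega), smul_zero]
  · have hins : Finset.range (m+1) = insert 0 (Finset.Icc 1 m) := by
      ext t; simp [Finset.mem_Icc, Nat.lt_succ_iff]; omega
    rw [hins, Finset.sum_insert (by simp)]
    simp only [Nat.choose_zero_right, Nat.cast_one, one_smul, mul_zero, add_zero]
    have hsub : ∑ k ∈ Finset.Icc 1 m, (m.choose k : ZMod 2) • rho n j (2*m + (2*j+1)*k)
        = ∑ k ∈ Finset.Icc 1 (2*n), (m.choose k : ZMod 2) • rho n j (2*m + (2*j+1)*k) := by
      apply Finset.sum_subset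
      · intro t ht
        simp only [Finset.mem_Icc] at ht ⊢
        omega
      · intro t ht ht'
        simp only [Finset.mem_Icc] at ht ht'
        rw [Nat.choose_eq_zero_of_lt (by omega)]
        simp
    rw [hsub]
    have := rho_eq (n := n) (j := j) (d := 2*m) (by omega)
    rw [if_neg (by simp [Nat.even_iff, parity_simps]), zero_add] at this
    have h2 : (2*m)/2 = m := by omega
    rw [h2] at this
    rw [← this]
    exact CharTwo.add_self_eq_zero _

lemma rho_claims (n j : ℕ) : ∀ N : ℕ, ∀ a s m : ℕ, Odd s → 2*n - 2^a*s ≤ N →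
    ((2*m+1 < 2^a*s + (2^a - 1)*(2*j+1) → (rho n j (2^a*s)).coeff m = 0) ∧
     (2*m+1 = 2^a*s + (2^a - 1)*(2*j+1) → 2*m+1 < 2*n → (rho n j (2^a*s)).coeff m = 1)) := by
  intro N
  induction N with
  | zero =>
    intro a s m hs hN
    rw [rho_of_ge (by omega)]
    exact ⟨fun _ => by simp, fun h1 h2 => by omega⟩
  | succ N IH =>
    intro a s m hs hN
    have hs1 : 1 ≤ s := hs.pos
    have hA1 : 1 ≤ 2^a := Nat.one_le_two_pow
    by_cases hd : 2*n ≤ 2^a*s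
    · rw [rho_of_ge hd]
      exact ⟨fun _ => by simp, fun h1 h2 => by omega⟩
    push_neg at hd
    have key0 : ∀ d' m' : ℕ, 2*n - d' ≤ N → 1 ≤ d' → 2*m'+1 < d' →
        (rho n j d').coeff m' = 0 := by
      intro d' m' h1 h2 h3
      obtain ⟨a', s', hs', hd'⟩ := Nat.exists_eq_two_pow_mul_odd (show d' ≠ 0 by omega)
      subst hd'
      exact (IH a' s' m' hs' h1).1 (Nat.lt_of_lt_of_le h3 (Nat.le_add_right _ _))
    have hJ1 : 1 ≤ 2*j+1 := by omega
    cases a with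
    | zero =>
      simp only [pow_zero, one_mul, Nat.sub_self, zero_mul, add_zero] at hd hN ⊢
      rw [rho_eq hd, if_pos hs]
      have hsum : ∀ m', 2*m'+1 ≤ s →
          (∑ t ∈ Finset.Icc 1 (2*n), ((s/2).choose t : ZMod 2) • rho n j (s + (2*j+1)*t)).coeff m'
            = 0 := by
        intro m' hm'
        rw [finset_sum_coeff]
        apply Finset.sum_eq_zero
        intro t ht
        have ht1 : 1 ≤ t := (Finset.mem_Icc.mp ht).1
        have hmul : 1*1 ≤ (2*j+1)*t := Nat.mul_le_mul hJ1 ht1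
        rw [coeff_smul, key0 (s + (2*j+1)*t) m' (by omega) (by omega) (by omega), smul_zero]
      have hs2 : s % 2 = 1 := Nat.odd_iff.mp hs
      constructor
      · intro h1
        rw [coeff_add, coeff_X_pow, if_neg (by omega), hsum m (by omega), add_zero]
      · intro h1 h2
        rw [coeff_add, coeff_X_pow, if_pos (by omega), hsum m (by omega), add_zero]
    | succ a' =>
      have hA'1 : 1 ≤ 2^a' := Nat.one_le_two_pow
      obtain ⟨F, hF⟩ : ∃ F, 2^a' = F+1 := ⟨2^a' - 1, by omega⟩
      have hpow : 2^(a'+1) = 2*2^a' := by rw [pow_succ]; ring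
      have h2e : 2^(a'+1)*s = 2*(2^a'*s) := by rw [pow_succ]; ring
      have hnotodd : ¬ Odd (2^(a'+1)*s) := by rw [Nat.odd_iff, h2e]; omega
      have hdiv : (2^(a'+1)*s)/2 = 2^a'*s := by
        rw [h2e]; exact Nat.mul_div_cancel_left _ (by norm_num)
      have hc1 : (2*2^a' - 1)*(2*j+1) = 2*(F*(2*j+1)) + (2*j+1) := by
        rw [show 2*2^a' - 1 = 2*F+1 by omega]; ring
      have hc2 : (2^a' - 1)*(2*j+1) = F*(2*j+1) := by rw [show 2^a' - 1 = F by omega]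
      have hAJ : (2*j+1)*(2^a') = F*(2*j+1) + (2*j+1) := by rw [hF]; ring
      have hA2J : (2*j+1)*(2^a'*2) = 2*(F*(2*j+1)) + 2*(2*j+1) := by rw [hF]; ring
      have hpowc : 2^(a'+1)*s + (2*2^a'-1)*(2*j+1) = 2^(a'+1)*s + (2^(a'+1)-1)*(2*j+1) := by
        rw [hpow]
      -- key term vanishing lemma
      have hterm : ∀ t, 1 ≤ t →
          2*m+1 ≤ 2^(a'+1)*s + (2*2^a' - 1)*(2*j+1) →
          (t = 2^a' → 2*m+1 ≠ 2^(a'+1)*s + (2*2^a' - 1)*(2*j+1)) →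
          (((2^a'*s).choose t : ℕ) : ZMod 2) •
            (rho n j (2^(a'+1)*s + (2*j+1)*t)).coeff m = 0 := by
        intro t ht1 hle hne
        by_cases hch : (((2^a'*s).choose t : ℕ) : ZMod 2) = 0
        · rw [hch, zero_smul]
        obtain ⟨t', htt'⟩ := cho_pow_dvd a' s t hch
        have ht'1 : 1 ≤ t' := by
          rcases Nat.eq_zero_or_pos t' with h | h
          · exfalso; rw [h, Nat.mul_zero] at htt'; omega
          · exact h
        rcases Nat.lt_or_ge t' 2 with h1' | h2'
        · -- t' = 1
          have ht'e : t' = 1 := by omega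
          have hte : t = 2^a' := by rw [htt', ht'e, Nat.mul_one]
          have hstrict : 2*m+1 < 2^(a'+1)*s + (2*2^a' - 1)*(2*j+1) :=
            lt_of_le_of_ne hle (hne hte)
          have hs2 : Odd (2*s + (2*j+1)) := by rw [Nat.odd_iff]; omega
          have hdt : 2^(a'+1)*s + (2*j+1)*t = 2^a'*(2*s + (2*j+1)) := by
            rw [hte, pow_succ]; ring
          have hAs2 : 2^a'*(2*s + (2*j+1)) = 2^(a'+1)*s + (2*j+1)*(2^a') := by
            rw [pow_succ]; ring
          have hJt1 : 1*1 ≤ (2*j+1)*t := Nat.mul_le_mul hJ1 ht1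
          rw [hdt, (IH a' (2*s + (2*j+1)) m hs2 (by omega)).1 (by omega), smul_zero]
        · -- t' ≥ 2 : use key0
          have hmono : (2*j+1)*(2^a'*2) ≤ (2*j+1)*t := by
            rw [htt']
            exact Nat.mul_le_mul_left _ (Nat.mul_le_mul_left _ h2')
          have hJt1 : 1*1 ≤ (2*j+1)*t := Nat.mul_le_mul hJ1 ht1
          rw [key0 (2^(a'+1)*s + (2*j+1)*t) m (by omega) (by omega) (by omega), smul_zero]
      rw [rho_eq hd, if_neg hnotodd, zero_add, hdiv]
      constructor
      · -- C1
        intro h1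
        rw [← hpowc] at h1
        rw [finset_sum_coeff]
        apply Finset.sum_eq_zero
        intro t ht
        rw [coeff_smul]
        exact hterm t (Finset.mem_Icc.mp ht).1 (le_of_lt h1) (fun _ => by omega)
      · -- C2
        intro h1 h2
        rw [← hpowc] at h1
        have hAin : 2^a' ∈ Finset.Icc 1 (2*n) := by
          have : 2^(a'+1)*1 ≤ 2^(a'+1)*s := Nat.mul_le_mul_left _ hs1
          refine Finset.mem_Icc.mpr ⟨hA'1, by omega⟩
        rw [finset_sum_coeff, Finset.sum_eq_single (2^a')]
        · -- main term = 1
          have hchv : ((((2^a'*s)).choose (2^a') : ℕ) : ZMod 2) = 1 := by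
            have hcm := cho_pow_mul a' s 1
            rw [Nat.mul_one] at hcm
            rw [hcm, cho_odd_one s hs]
          rw [coeff_smul, hchv]
          have hs2 : Odd (2*s + (2*j+1)) := by rw [Nat.odd_iff]; omega
          have hdt : 2^(a'+1)*s + (2*j+1)*(2^a') = 2^a'*(2*s + (2*j+1)) := by
            rw [pow_succ]; ring
          have hAs2 : 2^a'*(2*s + (2*j+1)) = 2^(a'+1)*s + (2*j+1)*(2^a') := by
            rw [pow_succ]; ring
          have hJt1 : 1*1 ≤ (2*j+1)*(2^a') := Nat.mul_le_mul hJ1 (by omega)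
          rw [hdt, (IH a' (2*s + (2*j+1)) m hs2 (by omega)).2 (by omega) h2, one_smul]
        · intro t ht htne
          rw [coeff_smul]
          exact hterm t (Finset.mem_Icc.mp ht).1 (le_of_eq h1) (fun h => absurd h htne)
        · intro h; exact absurd hAin h

lemma Ypow_expand (j m : ℕ) : (X^2 + X^(2*j+3) : Polynomial (ZMod 2))^m
    = ∑ k ∈ Finset.range (m+1), (m.choose k : ZMod 2) • X^(2*m + (2*j+1)*k) := by
  rw [add_comm, add_pow]
  apply Finset.sum_congr rfl
  intro k hk
  have hk' : k ≤ m := by simpa [Nat.lt_succ_iff] using hk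
  rw [← pow_mul, ← pow_mul, ← pow_add, Polynomial.smul_eq_C_mul, Polynomial.C_eq_natCast,
    mul_comm ((m.choose k : ℕ) : Polynomial (ZMod 2))]
  congr 2
  obtain ⟨u, hu⟩ : ∃ u, m = k + u := ⟨m - k, by omega⟩
  subst hu
  simp only [Nat.add_sub_cancel_left]
  ring

lemma mk_Xpow_high (n : ℕ) {e : ℕ} (he : 2*n ≤ e) :
    Ideal.Quotient.mk (Ideal.span {(X : Polynomial (ZMod 2))^(2*n)}) (X^e) = 0 := by
  rw [Ideal.Quotient.eq_zero_iff_mem]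
  exact Ideal.mem_span_singleton.mpr (pow_dvd_pow X he)

lemma Ypow_memU (n j : ℕ) (m : ℕ) (hm : 1 ≤ m) :
    (Ideal.Quotient.mk (Ideal.span {(X : Polynomial (ZMod 2))^(2*n)})
        (X^2 + X^(2*j+3)))^m ∈
      Submodule.span (ZMod 2)
        {y | ∃ m' : ℕ, 1 ≤ m' ∧ m' ≤ n - 1 ∧
          y = (Ideal.Quotient.mk (Ideal.span {(X : Polynomial (ZMod 2))^(2*n)})
            (X^2 + X^(2*j+3)))^m'} := by
  by_cases hsm : m ≤ n - 1
  · exact Submodule.subset_span ⟨m, hm, hsm, rfl⟩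
  · have hfac : (X^2 + X^(2*j+3) : Polynomial (ZMod 2)) = X^2 * (1 + X^(2*j+1)) := by ring
    have hz : (Ideal.Quotient.mk (Ideal.span {(X : Polynomial (ZMod 2))^(2*n)})
        (X^2 + X^(2*j+3)))^m = 0 := by
      rw [← map_pow, hfac, mul_pow, ← pow_mul, map_mul]
      rw [mk_Xpow_high n (by omega)]
      · exact zero_mul _
    rw [hz]; exact Submodule.zero_mem _

lemma memU (n j : ℕ) : ∀ N a s : ℕ, Odd s → 1 ≤ a → 2*n - 2^a*s ≤ N →
    2*n ≤ 2^a*s + (2^a - 1)*(2*j+1) →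
    Ideal.Quotient.mk (Ideal.span {(X : Polynomial (ZMod 2))^(2*n)}) (X^(2^a*s)) ∈
      Submodule.span (ZMod 2)
        {y | ∃ m' : ℕ, 1 ≤ m' ∧ m' ≤ n - 1 ∧
          y = (Ideal.Quotient.mk (Ideal.span {(X : Polynomial (ZMod 2))^(2*n)})
            (X^2 + X^(2*j+3)))^m'} := by
  intro N
  induction N with
  | zero =>
    intro a s hs ha hN hcond
    rw [mk_Xpow_high n (by omega)]
    exact Submodule.zero_mem _
  | succ N IH =>
    intro a s hs ha hN hcond
    have hs1 : 1 ≤ s := hs.pos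
    by_cases hd : 2*n ≤ 2^a*s
    · rw [mk_Xpow_high n hd]; exact Submodule.zero_mem _
    push_neg at hd
    obtain ⟨a', rfl⟩ : ∃ a', a = a'+1 := ⟨a-1, by omega⟩
    have hA'1 : 1 ≤ 2^a' := Nat.one_le_two_pow
    obtain ⟨F, hF⟩ : ∃ F, 2^a' = F+1 := ⟨2^a' - 1, by omega⟩
    have hJ1 : 1 ≤ 2*j+1 := by omega
    have hG1 : 1 ≤ 2^a'*s := Nat.mul_le_mul hA'1 hs1
    have hGd : 2^(a'+1)*s = 2*(2^a'*s) := by rw [pow_succ]; ring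
    have hc1 : (2*2^a' - 1)*(2*j+1) = 2*(F*(2*j+1)) + (2*j+1) := by
      rw [show 2*2^a' - 1 = 2*F+1 by omega]; ring
    have hcond' : 2*n ≤ 2^(a'+1)*s + (2*(F*(2*j+1)) + (2*j+1)) := by
      rw [← hc1]
      calc 2*n ≤ 2^(a'+1)*s + (2^(a'+1) - 1)*(2*j+1) := hcond
        _ = 2^(a'+1)*s + (2*2^a' - 1)*(2*j+1) := by rw [pow_succ]; ring_nf
    -- the expansion identity, with G := 2^a'*s
    have hins : Finset.range (2^a'*s+1) = insert 0 (Finset.Icc 1 (2^a'*s)) := by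
      ext t; simp [Finset.mem_Icc, Nat.lt_succ_iff]; omega
    have hYp := Ypow_expand j (2^a'*s)
    rw [hins, Finset.sum_insert (by simp)] at hYp
    simp only [Nat.choose_zero_right, Nat.cast_one, one_smul, mul_zero, add_zero] at hYp
    have hXd : (X : Polynomial (ZMod 2))^(2^(a'+1)*s)
        = (X^2 + X^(2*j+3))^(2^a'*s)
          + ∑ k ∈ Finset.Icc 1 (2^a'*s),
              ((2^a'*s).choose k : ZMod 2) • X^(2*(2^a'*s) + (2*j+1)*k) := by
      rw [hYp, hGd, add_assoc, CharTwo.add_self_eq_zero, add_zero]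
    have heq : Ideal.Quotient.mk (Ideal.span {(X : Polynomial (ZMod 2))^(2*n)})
        (X^(2^(a'+1)*s))
        = (Ideal.Quotient.mk (Ideal.span {(X : Polynomial (ZMod 2))^(2*n)})
            (X^2 + X^(2*j+3)))^(2^a'*s)
          + ∑ k ∈ Finset.Icc 1 (2^a'*s),
              Ideal.Quotient.mk (Ideal.span {(X : Polynomial (ZMod 2))^(2*n)})
                (((2^a'*s).choose k : ZMod 2) • X^(2*(2^a'*s) + (2*j+1)*k)) := by
      rw [hXd, map_add, map_pow, map_sum]
    rw [heq]
    apply Submodule.add_mem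
    · exact Ypow_memU n j (2^a'*s) hG1
    · apply Submodule.sum_mem
      intro k hk
      have hk1 : 1 ≤ k := (Finset.mem_Icc.mp hk).1
      have hsm : ∀ (c : ZMod 2) (p : Polynomial (ZMod 2)),
          Ideal.Quotient.mk (Ideal.span {(X : Polynomial (ZMod 2))^(2*n)}) (c • p)
          = c • Ideal.Quotient.mk (Ideal.span {(X : Polynomial (ZMod 2))^(2*n)}) p := by
        intro c p
        fin_cases c <;> simp <;> rfl
      rw [hsm]
      by_cases hch : (((2^a'*s).choose k : ℕ) : ZMod 2) = 0
      · rw [hch, zero_smul]; exact Submodule.zero_mem _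
      apply Submodule.smul_mem
      obtain ⟨t', htt'⟩ := cho_pow_dvd a' s k hch
      have ht'1 : 1 ≤ t' := by
        rcases Nat.eq_zero_or_pos t' with h | h
        · exfalso; rw [h, Nat.mul_zero] at htt'; omega
        · exact h
      by_cases hbig : 2*n ≤ 2*(2^a'*s) + (2*j+1)*k
      · rw [mk_Xpow_high n hbig]; exact Submodule.zero_mem _
      push_neg at hbig
      have hJk1 : 1*1 ≤ (2*j+1)*k := Nat.mul_le_mul hJ1 hk1
      have hJk : (2*j+1)*1 ≤ (2*j+1)*k := Nat.mul_le_mul_left _ hk1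
      by_cases ha'0 : a' = 0
      · exfalso
        subst ha'0
        have hF0 : F = 0 := by omega
        subst hF0
        have h01 : 2^(0+1)*s = 2*(2^0*s) := by norm_num
        omega
      have ha'1 : 1 ≤ a' := by omega
      rcases Nat.even_or_odd t' with hev | hod
      · exfalso
        have ht'2 : 2 ≤ t' := by
          obtain ⟨u, hu⟩ := hev
          omega
        have hA2J : (2*j+1)*(2^a'*2) = 2*(F*(2*j+1)) + 2*(2*j+1) := by rw [hF]; ring
        have hmono : (2*j+1)*(2^a'*2) ≤ (2*j+1)*k := by
          rw [htt']
          exact Nat.mul_le_mul_left _ (Nat.mul_le_mul_left _ ht'2)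
        omega
      · have hs2 : Odd (2*s + (2*j+1)*t') := by
          have := (Nat.odd_mul.mpr ⟨(by rw [Nat.odd_iff]; omega), hod⟩ :
            Odd ((2*j+1)*t'))
          rw [Nat.odd_iff] at this ⊢
          omega
        have he' : 2^a'*(2*s+(2*j+1)*t') = 2*(2^a'*s) + (2*j+1)*k := by
          rw [htt']; ring
        have hc2 : (2^a' - 1)*(2*j+1) = F*(2*j+1) := by rw [show 2^a' - 1 = F by omega]
        have hAJ1 : (2*j+1)*(2^a'*1) = F*(2*j+1) + (2*j+1) := by rw [hF]; ring
        have hJkA : (2*j+1)*(2^a'*1) ≤ (2*j+1)*k := by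
          rw [htt']
          exact Nat.mul_le_mul_left _ (Nat.mul_le_mul_left _ ht'1)
        have hgoal : 2*(2^a'*s) + (2*j+1)*k = 2^a'*(2*s+(2*j+1)*t') := he'.symm
        rw [hgoal]
        exact IH a' (2*s+(2*j+1)*t') hs2 ha'1 (by omega) (by omega)


lemma mk_smul (n : ℕ) (c : ZMod 2) (p : Polynomial (ZMod 2)) :
    Ideal.Quotient.mk (Ideal.span {(X : Polynomial (ZMod 2))^(2*n)}) (c • p)
      = c • Ideal.Quotient.mk (Ideal.span {(X : Polynomial (ZMod 2))^(2*n)}) p := by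
  fin_cases c <;> simp <;> rfl

lemma li_monomials (n : ℕ) : LinearIndependent (ZMod 2)
    (fun t : Fin (2*n) =>
      Ideal.Quotient.mk (Ideal.span {(X : Polynomial (ZMod 2))^(2*n)}) (X^(t:ℕ))) := by
  rw [Fintype.linearIndependent_iff]
  intro g hg t
  set P : Polynomial (ZMod 2) := ∑ t' : Fin (2*n), g t' • X^((t':ℕ)) with hP_def
  have hmk : Ideal.Quotient.mk (Ideal.span {(X : Polynomial (ZMod 2))^(2*n)}) P = 0 := by
    rw [hP_def, map_sum]
    rw [← hg]
    apply Finset.sum_congr rfl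
    intro t' _
    exact mk_smul n (g t') _
  have hdvd : (X : Polynomial (ZMod 2))^(2*n) ∣ P :=
    Ideal.mem_span_singleton.mp (Ideal.Quotient.eq_zero_iff_mem.mp hmk)
  have hco : ∀ t : Fin (2*n), P.coeff (t:ℕ) = g t := by
    intro t
    rw [hP_def, finset_sum_coeff]
    rw [Fintype.sum_eq_single t]
    · rw [coeff_smul, coeff_X_pow, if_pos rfl, smul_eq_mul, mul_one]
    · intro b hb
      rw [coeff_smul, coeff_X_pow, if_neg (fun h => hb (Fin.ext h.symm)), smul_zero]
  have hhigh : ∀ d, 2*n ≤ d → P.coeff d = 0 := by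
    intro d hd
    rw [hP_def, finset_sum_coeff]
    apply Finset.sum_eq_zero
    intro t' _
    rw [coeff_smul, coeff_X_pow, if_neg (by have := t'.isLt; omega), smul_zero]
  by_cases hP0 : P = 0
  · rw [← hco t, hP0, Polynomial.coeff_zero]
  · exfalso
    obtain ⟨H, hH⟩ := hdvd
    have hH0 : H ≠ 0 := fun h => hP0 (by rw [hH, h, mul_zero])
    have hdeg : 2*n ≤ P.natDegree := by
      rw [hH, Polynomial.natDegree_mul (pow_ne_zero _ Polynomial.X_ne_zero) hH0, Polynomial.natDegree_X_pow]
      omega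
    exact Polynomial.leadingCoeff_ne_zero.mpr hP0 (hhigh _ hdeg)

end KuelAux
open KuelAux

set_option maxHeartbeats 1000000 in
theorem kuelshammer_dim (n j i : ℕ) (hn : 1 ≤ n) (hi : 1 ≤ i)
    (W : Submodule (ZMod 2)
      (Polynomial (ZMod 2) ⧸ Ideal.span {(Polynomial.X : Polynomial (ZMod 2)) ^ (2 * n)}))
    (hW : ∀ f, f ∈ W ↔
      (f ∈ Submodule.span (ZMod 2)
        {x | ∃ k : ℕ, k ≤ n - 1 ∧
          x = Ideal.Quotient.mk
                (Ideal.span {(Polynomial.X : Polynomial (ZMod 2)) ^ (2 * n)})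
                (Polynomial.X ^ (2 * k + 1))} ∧
        f ^ (2 ^ i) ∈ Submodule.span (ZMod 2)
        {y | ∃ m : ℕ, 1 ≤ m ∧ m ≤ n - 1 ∧
          y = (Ideal.Quotient.mk
                (Ideal.span {(Polynomial.X : Polynomial (ZMod 2)) ^ (2 * n)})
                (Polynomial.X ^ 2 + Polynomial.X ^ (2 * j + 3))) ^ m})) :
    (Module.finrank (ZMod 2) W : ℤ) =
      (n : ℤ) - max
        ⌈((2 * n : ℚ) - (2 ^ (i + 1) - 2) * j - (2 ^ (i + 1) - 1)) / 2 ^ (i + 1)⌉ 0 := by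
  obtain ⟨i', rfl⟩ : ∃ i', i = i'+1 := ⟨i-1, by omega⟩
  clear hi
  -- numeric setup
  obtain ⟨q1, hq1_def⟩ : ∃ v : ℕ, v = 2^(i'+1) := ⟨_, rfl⟩
  have hq1 : 1 ≤ q1 := by rw [hq1_def]; exact Nat.one_le_two_pow
  obtain ⟨Q, hQ_def⟩ : ∃ v : ℕ, v = 2^(i'+1+1) := ⟨_, rfl⟩
  have hQ4 : 4 ≤ Q := by
    have h1 : 1 ≤ 2^i' := Nat.one_le_two_pow
    have : Q = 4*2^i' := by rw [hQ_def]; ring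
    omega
  have hQq : Q = 2*q1 := by rw [hQ_def, hq1_def]; ring
  obtain ⟨base, hbase_def⟩ : ∃ v : ℕ, v = q1 + (q1 - 1)*(2*j+1) + 1 := ⟨_, rfl⟩
  have hQq : Q = 2*q1 := by rw [hQ_def, hq1_def]; ring
  have hbase_ge : Q ≤ base := by
    have h1 : (q1-1)*1 ≤ (q1-1)*(2*j+1) := Nat.mul_le_mul_left _ (by omega)
    omega
  obtain ⟨c, hc_def⟩ : ∃ v : ℕ, v = (if base ≤ 2*n then (2*n - base)/Q + 1 else 0) := ⟨_, rfl⟩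
  have hcond : ∀ k : ℕ, k < c ↔ Q*k + base ≤ 2*n := by
    intro k
    rw [hc_def]
    split_ifs with hb
    · rw [Nat.lt_succ_iff, Nat.le_div_iff_mul_le (by omega : 0 < Q)]
      have : k*Q = Q*k := Nat.mul_comm _ _
      omega
    · have : 0 ≤ Q*k := Nat.zero_le _
      omega
  have hcn : c ≤ n := by
    rw [hc_def]
    split_ifs with hb
    · have hd1 : (2*n - base)/Q*Q ≤ 2*n - base := Nat.div_mul_le_self _ _
      have hd2 : 4*((2*n - base)/Q + 1) ≤ Q*((2*n - base)/Q + 1) :=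
        Nat.mul_le_mul_right _ hQ4
      have hd3 : Q*((2*n - base)/Q + 1) = (2*n - base)/Q*Q + Q := by ring
      omega
    · omega
  have hk_ge : ∀ k : ℕ, c ≤ k → 2*n ≤ 2^(i'+1)*(2*k+1) + (2^(i'+1) - 1)*(2*j+1) := by
    intro k hk
    have h1 : ¬ (k < c) := by omega
    rw [hcond] at h1
    rw [← hq1_def]
    have h2 : q1*(2*k+1) = Q*k + q1 := by rw [hQq]; ring
    rw [h2]
    omega
  have hk_lt : ∀ k : ℕ, k < c →
      2^(i'+1)*(2*k+1) + (2^(i'+1) - 1)*(2*j+1) + 1 ≤ 2*n := by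
    intro k hk
    rw [hcond] at hk
    rw [← hq1_def]
    have h2 : q1*(2*k+1) = Q*k + q1 := by rw [hQq]; ring
    omega
  -- the span description of W
  have hspan : W = Submodule.span (ZMod 2)
      (Set.range (fun l : Fin (n - c) => Ideal.Quotient.mk (Ideal.span {(Polynomial.X : Polynomial (ZMod 2)) ^ (2 * n)}) (X^(2*(c+(l:ℕ))+1)))) := by
    apply le_antisymm
    · -- W ≤ span
      intro f hf
      obtain ⟨h1, h2⟩ := (hW f).mp hf
      have hset1 : {x | ∃ k : ℕ, k ≤ n - 1 ∧ x = Ideal.Quotient.mk (Ideal.span {(Polynomial.X : Polynomial (ZMod 2)) ^ (2 * n)}) (Polynomial.X ^ (2 * k + 1))}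
          = Set.range (fun k : Fin n => Ideal.Quotient.mk (Ideal.span {(Polynomial.X : Polynomial (ZMod 2)) ^ (2 * n)}) (X^(2*(k:ℕ)+1))) := by
        ext x
        constructor
        · rintro ⟨k, hk, rfl⟩
          exact ⟨⟨k, by omega⟩, rfl⟩
        · rintro ⟨k, rfl⟩
          exact ⟨(k:ℕ), by have := k.isLt; omega, rfl⟩
      have hset2 : {y | ∃ m : ℕ, 1 ≤ m ∧ m ≤ n - 1 ∧
            y = (Ideal.Quotient.mk (Ideal.span {(Polynomial.X : Polynomial (ZMod 2)) ^ (2 * n)}) (Polynomial.X ^ 2 + Polynomial.X ^ (2 * j + 3))) ^ m}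
          = Set.range (fun m : Fin (n-1) =>
              (Ideal.Quotient.mk (Ideal.span {(Polynomial.X : Polynomial (ZMod 2)) ^ (2 * n)}) (X^2 + X^(2*j+3)))^((m:ℕ)+1)) := by
        ext y
        constructor
        · rintro ⟨m, hm1, hm2, rfl⟩
          refine ⟨⟨m-1, by omega⟩, ?_⟩
          simp only []
          congr 1
          omega
        · rintro ⟨m, rfl⟩
          exact ⟨(m:ℕ)+1, by omega, by have := m.isLt; omega, rfl⟩
      rw [hset1, Submodule.mem_span_range_iff_exists_fun] at h1
      obtain ⟨a, ha⟩ := h1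
      rw [hset2, Submodule.mem_span_range_iff_exists_fun] at h2
      obtain ⟨cf, hcf⟩ := h2
      set F : Polynomial (ZMod 2) := ∑ k : Fin n, a k • X^(2*(k:ℕ)+1) with hF_def
      set G : Polynomial (ZMod 2) :=
        ∑ m : Fin (n-1), cf m • ((X^2 + X^(2*j+3))^((m:ℕ)+1)) with hG_def
      have hmkF : Ideal.Quotient.mk (Ideal.span {(Polynomial.X : Polynomial (ZMod 2)) ^ (2 * n)}) F = f := by
        rw [hF_def, map_sum, ← ha]
        exact Finset.sum_congr rfl fun k _ => mk_smul n (a k) _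
      have hmkG : Ideal.Quotient.mk (Ideal.span {(Polynomial.X : Polynomial (ZMod 2)) ^ (2 * n)}) G = f^(2^(i'+1)) := by
        rw [hG_def, map_sum, ← hcf]
        apply Finset.sum_congr rfl
        intro m _
        rw [mk_smul n (cf m), map_pow]
      have hEq : Ideal.Quotient.mk (Ideal.span {(Polynomial.X : Polynomial (ZMod 2)) ^ (2 * n)}) (F^(2^(i'+1))) = Ideal.Quotient.mk (Ideal.span {(Polynomial.X : Polynomial (ZMod 2)) ^ (2 * n)}) G := by
        rw [map_pow, hmkF, hmkG]
      obtain ⟨H, hH⟩ := Ideal.mem_span_singleton.mp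
        ((Ideal.Quotient.eq).mp hEq)
      have hFG : F^(2^(i'+1)) = G + X^(2*n) * H := by
        have := eq_add_of_sub_eq hH
        rw [this]; ring
      have hpow2 : ∀ cz : ZMod 2, cz^(2^(i'+1)) = cz := by
        intro cz; exact ZMod.pow_card_pow (p := 2) cz
      have hF2 : F^(2^(i'+1)) = ∑ k : Fin n, a k • X^(2^(i'+1)*(2*(k:ℕ)+1)) := by
        rw [hF_def, sum_pow_char_pow (p := 2) (n := i'+1)]
        apply Finset.sum_congr rfl
        intro k _
        rw [_root_.smul_pow, hpow2 (a k), ← pow_mul']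
      have hG0 : rtil n j G = 0 := by
        rw [hG_def, rtil_finset_sum]
        apply Finset.sum_eq_zero
        intro m _
        rw [rtil_smul, rtil_Ypow n j _ (by omega), smul_zero]
      have hMain : ∑ k : Fin n, a k • rho n j (2^(i'+1)*(2*(k:ℕ)+1)) = 0 := by
        have h0 : rtil n j (F^(2^(i'+1))) = 0 := by
          rw [hFG, rtil_add, rtil_Xpow_mul, hG0, add_zero]
        rw [hF2, rtil_finset_sum] at h0
        rw [← h0]
        apply Finset.sum_congr rfl
        intro k _
        rw [rtil_smul, rtil_X_pow]
      -- coefficients below c vanish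
      have hzero : ∀ K : ℕ, ∀ k : Fin n, (k:ℕ) = K → (k:ℕ) < c → a k = 0 := by
        intro K
        induction K using Nat.strong_induction_on with
        | _ K IHK =>
          intro k hkK hkc
          have hodd1 : Odd ((2^(i'+1) - 1)*(2*j+1)) := by
            refine Nat.odd_mul.mpr ⟨?_, by rw [Nat.odd_iff]; omega⟩
            have : 2^(i'+1) = 2*2^i' := by ring
            rw [Nat.odd_iff]
            omega
          have hEv : ∀ M : ℕ, 2^(i'+1)*M = 2*(2^i'*M) := by intro M; ring
          obtain ⟨mK, hmK⟩ : ∃ mm : ℕ,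
              2*mm+1 = 2^(i'+1)*(2*K+1) + (2^(i'+1) - 1)*(2*j+1) := by
            have h1 := hEv (2*K+1)
            have h2 := Nat.odd_iff.mp hodd1
            exact ⟨(2^(i'+1)*(2*K+1) + (2^(i'+1) - 1)*(2*j+1) - 1)/2, by omega⟩
          have hcoeff := congrArg (fun p => Polynomial.coeff p mK) hMain
          simp only [finset_sum_coeff, coeff_smul, Polynomial.coeff_zero] at hcoeff
          rw [Fintype.sum_eq_single k] at hcoeff
          · -- main term
            have hC2 := (rho_claims n j (2*n) (i'+1) (2*(k:ℕ)+1) mK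
              (by rw [Nat.odd_iff]; omega) (by omega)).2
            rw [hkK] at hC2
            rw [hkK, hC2 (by omega) (by have := hk_lt K (by omega); omega)] at hcoeff
            simpa using hcoeff
          · intro b hb
            have hbK : (b:ℕ) ≠ K := by
              rw [← hkK]
              exact fun h => hb (Fin.ext h)
            rcases Nat.lt_or_ge (b:ℕ) K with hlt | hge
            · rw [IHK (b:ℕ) hlt b rfl (by omega), zero_smul]
            · have hgt : K < (b:ℕ) := by omega
              have hC1 := (rho_claims n j (2*n) (i'+1) (2*(b:ℕ)+1) mK
                (by rw [Nat.odd_iff]; omega) (by omega)).1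
              have hmono : 2^(i'+1)*(2*K+1) < 2^(i'+1)*(2*(b:ℕ)+1) :=
                mul_lt_mul_of_pos_left (by omega) (by positivity)
              rw [hC1 (by omega), smul_zero]
      rw [← hmkF, hF_def, map_sum]
      apply Submodule.sum_mem
      intro k _
      rw [mk_smul n (a k)]
      by_cases hkc : (k:ℕ) < c
      · rw [hzero (k:ℕ) k rfl hkc, zero_smul]
        exact Submodule.zero_mem _
      · apply Submodule.smul_mem
        apply Submodule.subset_span
        refine ⟨⟨(k:ℕ) - c, by have := k.isLt; omega⟩, ?_⟩
        simp only []
        congr 2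
        omega
    · -- span ≤ W
      rw [Submodule.span_le]
      rintro x ⟨l, rfl⟩
      have hl := l.isLt
      rw [SetLike.mem_coe, hW]
      constructor
      · exact Submodule.subset_span ⟨c+(l:ℕ), by omega, rfl⟩
      · rw [← map_pow, ← pow_mul, mul_comm (2*(c+(l:ℕ))+1) (2^(i'+1))]
        by_cases hbig : 2*n ≤ 2^(i'+1)*(2*(c+(l:ℕ))+1)
        · rw [mk_Xpow_high n hbig]
          exact Submodule.zero_mem _
        · exact memU n j (2*n) (i'+1) (2*(c+(l:ℕ))+1)
            (by rw [Nat.odd_iff]; omega) (by omega) (by omega)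
            (hk_ge (c+(l:ℕ)) (by omega))
  -- finrank computation
  have hli : LinearIndependent (ZMod 2)
      (fun l : Fin (n - c) => Ideal.Quotient.mk (Ideal.span {(Polynomial.X : Polynomial (ZMod 2)) ^ (2 * n)}) (X^(2*(c+(l:ℕ))+1))) := by
    have hbig := li_monomials n
    have := hbig.comp (fun l : Fin (n-c) => (⟨2*(c+(l:ℕ))+1, by have := l.isLt; omega⟩ : Fin (2*n)))
      (fun l1 l2 h => by
        have : 2*(c+(l1:ℕ))+1 = 2*(c+(l2:ℕ))+1 := congrArg Fin.val h
        exact Fin.ext (by omega))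
    exact this
  have hfr : Module.finrank (ZMod 2) W = n - c := by
    rw [hspan, finrank_span_eq_card hli, Fintype.card_fin]
  rw [hfr]
  clear hW hspan hli hfr W
  -- final numeric identity
  have hq1Q : (2:ℚ)^(i'+1+1) = (Q:ℕ) := by rw [hQ_def]; push_cast; ring
  have hbase_cast : (base:ℚ) = 2^(i'+1) + ((2:ℚ)^(i'+1) - 1)*(2*j+1) + 1 := by
    rw [hbase_def, hq1_def]
    push_cast [Nat.cast_sub (show 1 ≤ 2^(i'+1) from Nat.one_le_two_pow)]
    ring
  have hQpos : (0:ℚ) < 2^(i'+1+1) := by positivity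
  by_cases hb : base ≤ 2*n
  · have hc1 : c = (2*n - base)/Q + 1 := by rw [hc_def, if_pos hb]
    obtain ⟨S, hS_def⟩ : ∃ v : ℕ, v = 2*n - base := ⟨_, rfl⟩
    obtain ⟨D, hD_def⟩ : ∃ v : ℕ, v = S/Q := ⟨_, rfl⟩
    have hDa : D*Q ≤ S := by rw [hD_def]; exact Nat.div_mul_le_self _ _
    have hDb : S < D*Q + Q := by
      have h1 := Nat.div_add_mod S Q
      have h2 : S % Q < Q := Nat.mod_lt _ (by omega)
      have h3 : Q*(S/Q) = (S/Q)*Q := Nat.mul_comm _ _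
      rw [hD_def]
      omega
    have hnum : (2*n:ℚ) - (2^(i'+1+1) - 2)*j - (2^(i'+1+1) - 1) = (S:ℚ) + 1 := by
      rw [hS_def, Nat.cast_sub hb, hbase_cast]
      push_cast
      ring
    have hcD : c = D + 1 := by rw [hc1, ← hS_def, ← hD_def]
    have hc' : (c:ℚ) = (D:ℚ) + 1 := by rw [hcD]; push_cast; ring
    have hceil : ⌈((2*n:ℚ) - (2^(i'+1+1) - 2)*j - (2^(i'+1+1) - 1)) / 2^(i'+1+1)⌉
        = (c:ℤ) := by
      rw [Int.ceil_eq_iff]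
      constructor
      · rw [lt_div_iff₀ hQpos, hnum, hq1Q]
        have hDa' : ((D*Q:ℕ):ℚ) ≤ (S:ℚ) := Nat.cast_le.mpr hDa
        push_cast at hDa'
        push_cast
        rw [hc']
        have hrng : ((D:ℚ) + 1 - 1)*(Q:ℚ) = (D:ℚ)*(Q:ℚ) := by ring
        rw [hrng]
        linarith
      · rw [div_le_iff₀ hQpos, hnum, hq1Q]
        have hDb' : ((S+1:ℕ):ℚ) ≤ ((D*Q + Q:ℕ):ℚ) := Nat.cast_le.mpr (by omega)
        push_cast at hDb'
        push_cast
        rw [hc']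
        have hrng : ((D:ℚ) + 1)*(Q:ℚ) = (D:ℚ)*(Q:ℚ) + (Q:ℚ) := by ring
        rw [hrng]
        linarith
    rw [hceil, max_eq_left (by positivity)]
    push_cast [Nat.cast_sub hcn]
    ring
  · have hc0 : c = 0 := by rw [hc_def, if_neg hb]
    have hxle : ((2*n:ℚ) - (2^(i'+1+1) - 2)*j - (2^(i'+1+1) - 1)) / 2^(i'+1+1) ≤ 0 := by
      apply div_nonpos_of_nonpos_of_nonneg _ (le_of_lt hQpos)
      have hnum2 : (2*n:ℚ) - (2^(i'+1+1) - 2)*j - (2^(i'+1+1) - 1)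
          = (2*n:ℚ) + 1 - base := by
        rw [hbase_cast]; push_cast; ring
      rw [hnum2]
      have : ((2*n+1:ℕ):ℚ) ≤ ((base:ℕ):ℚ) := Nat.cast_le.mpr (by omega)
      push_cast at this
      linarith
    rw [max_eq_right (Int.ceil_le.mpr (by exact_mod_cast hxle))]
    rw [hc0]
    simp
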